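/- If the block tridiagonal matrix A (with invertible superdiagonal blocks) is diagonalizable, then its characteristic polynomial equals det P_L(x) up to a nonzero constant factor: p_A(x) = (1/c)·det P_L(x), where c = det(D_0 ⋯ D_{L-1})^{-1}. In particular, every eigenvalue λ of A has algebraic multiplicity equal to its multiplicity as a root of det P_L(x). -/

import Mathlib

open Polynomial

namespace BlockTridiagAux

open Matrix

variable {K L : ℕ}

noncomputable def mcoeff (n : ℕ) (M : Matrix (Fin K) (Fin K) (Polynomial ℂ)) :
    Matrix (Fin K) (Fin K) ℂ :=
  Matrix.of fun k l => (M k l).coeff n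

lemma deg_mul {M N : Matrix (Fin K) (Fin K) (Polynomial ℂ)} {a b : ℕ}
    (hM : ∀ k l, (M k l).natDegree ≤ a) (hN : ∀ k l, (N k l).natDegree ≤ b) :
    ∀ k l, ((M * N) k l).natDegree ≤ a + b := by
  intro k l
  rw [Matrix.mul_apply]
  exact natDegree_sum_le_of_forall_le _ _ fun j _ =>
    natDegree_mul_le.trans (add_le_add (hM k j) (hN j l))

lemma mcoeff_mul {M N : Matrix (Fin K) (Fin K) (Polynomial ℂ)} {a b : ℕ}
    (hM : ∀ k l, (M k l).natDegree ≤ a) (hN : ∀ k l, (N k l).natDegree ≤ b) :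
    mcoeff (a + b) (M * N) = mcoeff a M * mcoeff b N := by
  ext k l
  simp only [mcoeff, Matrix.of_apply, Matrix.mul_apply, finset_sum_coeff]
  exact Finset.sum_congr rfl fun j _ => coeff_mul_add_eq_of_natDegree_le (hM k j) (hN j l)

lemma deg_mapC (N : Matrix (Fin K) (Fin K) ℂ) : ∀ k l, ((N.map ⇑C) k l).natDegree ≤ 0 := by
  intro k l; simp [Matrix.map_apply]

lemma mcoeff_mapC (N : Matrix (Fin K) (Fin K) ℂ) : mcoeff 0 (N.map ⇑C) = N := by
  ext k l; simp [mcoeff, Matrix.map_apply]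

lemma det_ne_zero_of_unit_mcoeff {M : Matrix (Fin K) (Fin K) (Polynomial ℂ)} {n : ℕ}
    (hdeg : ∀ k l, (M k l).natDegree ≤ n) (hunit : IsUnit (mcoeff n M)) :
    M.det ≠ 0 := by
  have h : (M.det).coeff (K * n) = (mcoeff n M).det := by
    rw [Matrix.det_apply, Matrix.det_apply, finset_sum_coeff]
    refine Finset.sum_congr rfl fun σ _ => ?_
    rw [coeff_smul]
    congr 1
    have := coeff_prod_of_natDegree_le (s := (Finset.univ : Finset (Fin K)))
      (f := fun i => M (σ i) i) (n := n) (fun p _ => hdeg _ _)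
    simpa [Finset.card_univ, mcoeff] using this
  intro h0
  have hdet : (mcoeff n M).det ≠ 0 :=
    (Matrix.isUnit_iff_isUnit_det _ |>.mp hunit).ne_zero
  rw [h0, coeff_zero] at h
  exact hdet h.symm

lemma phi_mapC (x : ℂ) (N : Matrix (Fin K) (Fin K) ℂ) :
    (evalRingHom x).mapMatrix (N.map ⇑C) = N := by
  ext k l
  simp [Matrix.map_apply]

lemma phi_smulX (x : ℂ) (N : Matrix (Fin K) (Fin K) (Polynomial ℂ)) :
    (evalRingHom x).mapMatrix ((X : Polynomial ℂ) • N) = x • (evalRingHom x).mapMatrix N := by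
  ext k l
  simp [Matrix.map_apply, Matrix.smul_apply, smul_eq_mul]

lemma P_deg_unit (Bm Cm Dm : ℕ → Matrix (Fin K) (Fin K) ℂ) (hD : ∀ n, IsUnit (Dm n))
    (P : ℕ → Matrix (Fin K) (Fin K) (Polynomial ℂ))
    (hP0 : P 0 = 1)
    (hP1 : P 1 = ((Dm 0)⁻¹).map Polynomial.C *
      ((Polynomial.X : Polynomial ℂ) • (1 : Matrix (Fin K) (Fin K) (Polynomial ℂ)) -
        (Bm 0).map Polynomial.C))
    (hPrec : ∀ n, P (n + 2) = ((Dm (n + 1))⁻¹).map Polynomial.C *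
      ((Polynomial.X : Polynomial ℂ) • P (n + 1) -
        (Bm (n + 1)).map Polynomial.C * P (n + 1) -
        (Cm n).map Polynomial.C * P n)) :
    ∀ n, (∀ k l, ((P n) k l).natDegree ≤ n) ∧ IsUnit (mcoeff n (P n)) := by
  -- base 0
  have h0 : (∀ k l, ((P 0) k l).natDegree ≤ 0) ∧ IsUnit (mcoeff 0 (P 0)) := by
    constructor
    · intro k l
      rw [hP0]
      by_cases h : k = l <;> simp [Matrix.one_apply, h]
    · have : mcoeff 0 (P 0) = 1 := by
        ext k l
        by_cases h : k = l <;> simp [mcoeff, hP0, Matrix.one_apply, h]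
      rw [this]; exact isUnit_one
  -- generic step lemma: deg and coeff of `X • Q - R` pieces
  have hstep : ∀ (m : ℕ) (Q R : Matrix (Fin K) (Fin K) (Polynomial ℂ)),
      (∀ k l, (Q k l).natDegree ≤ m) → (∀ k l, (R k l).natDegree ≤ m) →
      (∀ k l, (((X : Polynomial ℂ) • Q - R) k l).natDegree ≤ m + 1) ∧
        mcoeff (m + 1) ((X : Polynomial ℂ) • Q - R) = mcoeff m Q := by
    intro m Q R hQ hR
    constructor
    · intro k l
      have h1 : ((X : Polynomial ℂ) * Q k l).natDegree ≤ m + 1 := by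
        refine natDegree_mul_le.trans ?_
        simpa [add_comm] using add_le_add (natDegree_X_le : (X : Polynomial ℂ).natDegree ≤ 1) (hQ k l)
      have := natDegree_sub_le ((X : Polynomial ℂ) * Q k l) (R k l)
      simp only [Matrix.sub_apply, Matrix.smul_apply, smul_eq_mul]
      exact (natDegree_sub_le _ _).trans (max_le h1 ((hR k l).trans (by omega)))
    · ext k l
      simp only [mcoeff, Matrix.of_apply, Matrix.sub_apply, Matrix.smul_apply, smul_eq_mul,
        coeff_sub, coeff_X_mul]
      rw [coeff_eq_zero_of_natDegree_lt (lt_of_le_of_lt (hR k l) (by omega)), sub_zero]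
  have h1 : (∀ k l, ((P 1) k l).natDegree ≤ 1) ∧ IsUnit (mcoeff 1 (P 1)) := by
    have hone : ∀ k l, ((1 : Matrix (Fin K) (Fin K) (Polynomial ℂ)) k l).natDegree ≤ 0 := by
      intro k l; by_cases h : k = l <;> simp [Matrix.one_apply, h]
    have hs := hstep 0 1 ((Bm 0).map C) hone (deg_mapC _)
    constructor
    · intro k l
      rw [hP1]
      simpa using deg_mul (deg_mapC ((Dm 0)⁻¹)) hs.1 k l
    · have : mcoeff 1 (P 1) = (Dm 0)⁻¹ := by
        rw [hP1]
        have := mcoeff_mul (a := 0) (b := 1) (deg_mapC ((Dm 0)⁻¹)) hs.1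
        simp only [zero_add] at this
        rw [this, hs.2, mcoeff_mapC]
        have : mcoeff 0 (1 : Matrix (Fin K) (Fin K) (Polynomial ℂ)) = 1 := by
          ext k l; by_cases h : k = l <;> simp [mcoeff, Matrix.one_apply, h]
        rw [this, mul_one]
      rw [this]
      exact Matrix.isUnit_nonsing_inv_iff.mpr (hD 0)
  intro n
  induction n using Nat.twoStepInduction with
  | zero => exact h0
  | one => exact h1
  | more m ihm ihm1 =>
    -- P (m+2)
    have hQ := ihm1.1
    have hR : ∀ k l, (((Bm (m+1)).map C * P (m+1) + (Cm m).map C * P m) k l).natDegree ≤ m + 1 := by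
      intro k l
      have h1 := deg_mul (deg_mapC (Bm (m+1))) ihm1.1 k l
      have h2 := deg_mul (deg_mapC (Cm m)) ihm.1 k l
      simp only [zero_add] at h1 h2
      simp only [Matrix.add_apply]
      exact (natDegree_add_le _ _).trans (max_le h1 (h2.trans (by omega)))
    have hs := hstep (m+1) (P (m+1)) _ hQ hR
    have hform : (X : Polynomial ℂ) • P (m+1) - (Bm (m+1)).map C * P (m+1) - (Cm m).map C * P m
        = (X : Polynomial ℂ) • P (m+1) - ((Bm (m+1)).map C * P (m+1) + (Cm m).map C * P m) := by
      rw [sub_sub]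
    constructor
    · intro k l
      rw [hPrec m, hform]
      simpa using deg_mul (deg_mapC ((Dm (m+1))⁻¹)) hs.1 k l
    · have heq : mcoeff (m+2) (P (m+2)) = (Dm (m+1))⁻¹ * mcoeff (m+1) (P (m+1)) := by
        rw [hPrec m, hform]
        have := mcoeff_mul (a := 0) (b := m + 2) (deg_mapC ((Dm (m+1))⁻¹)) hs.1
        simp only [zero_add] at this
        rw [this, hs.2, mcoeff_mapC]
      rw [heq]
      exact (Matrix.isUnit_nonsing_inv_iff.mpr (hD (m+1))).mul ihm1.2
lemma split_sum {M : Type*} [AddCommGroup M] (L i : ℕ) (hi : i < L)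
    (c d bb : ℕ → M) :
    (∑ t ∈ Finset.range L,
      ((if i = t then bb t else 0) + (if t = i + 1 then d t else 0) +
        (if i = t + 1 then c t else 0))) =
    bb i + (if i + 1 < L then d (i + 1) else 0) + (if 1 ≤ i then c (i - 1) else 0) := by
  rw [Finset.sum_add_distrib, Finset.sum_add_distrib]
  congr 1
  · congr 1
    · rw [Finset.sum_ite_eq]
      simp [Finset.mem_range.mpr hi]
    · rw [Finset.sum_ite_eq']
      simp [Finset.mem_range]
  · cases i with
    | zero => simp
    | succ a =>
      have h : ∀ t, (if a + 1 = t + 1 then c t else 0) = (if t = a then c t else 0) := by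
        intro t
        by_cases h : t = a <;> simp [h] <;> omega
      rw [Finset.sum_congr rfl fun t _ => h t, Finset.sum_ite_eq']
      have ha : a ∈ Finset.range L := Finset.mem_range.mpr (by omega)
      simp [ha]

def blockEquiv (a : Fin L) : { z : Fin L × Fin K // z.1 = a } ≃ Fin K where
  toFun z := z.1.2
  invFun k := ⟨(a, k), rfl⟩
  left_inv := by rintro ⟨⟨i, k⟩, rfl⟩; rfl
  right_inv k := rfl

lemma det_toSquareBlock_fst (M : Matrix (Fin L × Fin K) (Fin L × Fin K) ℂ) (a : Fin L)
    (N : Matrix (Fin K) (Fin K) ℂ)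
    (h : ∀ z w : Fin L × Fin K, z.1 = a → w.1 = a → M z w = N z.2 w.2) :
    (M.toSquareBlock Prod.fst a).det = N.det := by
  have he : M.toSquareBlock Prod.fst a = N.submatrix (blockEquiv a) (blockEquiv a) := by
    ext z w
    exact h z.1 w.1 z.2 w.2
  rw [he, Matrix.det_submatrix_equiv_self]

lemma det_block (K L : ℕ) (hK : 0 < K) (x : ℂ)
    (Bm Cm Dm : ℕ → Matrix (Fin K) (Fin K) ℂ)
    (A : Matrix (Fin L × Fin K) (Fin L × Fin K) ℂ)
    (hA : ∀ (i j : Fin L) (k l : Fin K),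
      A (i, k) (j, l) =
        if (i : ℕ) = (j : ℕ) then Bm (i : ℕ) k l
        else if (j : ℕ) = (i : ℕ) + 1 then Dm (i : ℕ) k l
        else if (i : ℕ) = (j : ℕ) + 1 then Cm (j : ℕ) k l
        else 0)
    (p : ℕ → Matrix (Fin K) (Fin K) ℂ)
    (hp0 : p 0 = 1)
    (hx1 : Dm 0 * p 1 = x • 1 - Bm 0)
    (hxr : ∀ n, Dm (n + 1) * p (n + 2) =
      x • p (n + 1) - Bm (n + 1) * p (n + 1) - Cm n * p n)
    (hpd : ∀ j, j < L → IsUnit (p j).det) :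
    (x • (1 : Matrix (Fin L × Fin K) (Fin L × Fin K) ℂ) - A).det
      = (∏ i ∈ Finset.range L, (Dm i).det) * (p L).det := by
  classical
  set mb : ℕ → ℕ → Matrix (Fin K) (Fin K) ℂ := fun a b =>
    if a = b then x • 1 - Bm a else if b = a + 1 then -(Dm a)
      else if a = b + 1 then -(Cm b) else 0 with hmb
  set ub : ℕ → ℕ → Matrix (Fin K) (Fin K) ℂ := fun a b =>
    if a ≤ b then p a * (p b)⁻¹ else 0 with hub
  set Mb : Matrix (Fin L × Fin K) (Fin L × Fin K) ℂ :=
    Matrix.of fun ik jl => mb ik.1 jl.1 ik.2 jl.2 with hMbdef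
  set Ub : Matrix (Fin L × Fin K) (Fin L × Fin K) ℂ :=
    Matrix.of fun ik jl => ub ik.1 jl.1 ik.2 jl.2 with hUbdef
  -- Mb is x•1 - A
  have hMb : Mb = x • (1 : Matrix (Fin L × Fin K) (Fin L × Fin K) ℂ) - A := by
    ext ⟨i, k⟩ ⟨j, l⟩
    simp only [hMbdef, Matrix.of_apply, Matrix.sub_apply, Matrix.smul_apply, Matrix.one_apply,
      hA i j k l, hmb, Prod.mk.injEq, smul_eq_mul]
    by_cases h1 : (i : ℕ) = (j : ℕ)
    · have : i = j := Fin.ext h1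
      subst this
      simp only [h1, if_true, if_pos rfl, true_and]
      by_cases h2 : k = l <;>
        simp [h2, Matrix.sub_apply, Matrix.smul_apply, smul_eq_mul]
    · have hne : ¬(i = j ∧ k = l) := by
        rintro ⟨rfl, -⟩; exact h1 rfl
      rw [if_neg h1, if_neg hne, mul_zero, zero_sub]
      rw [if_neg h1]
      split_ifs <;> simp [Matrix.neg_apply]
  -- entries of the product
  have hprod : ∀ (i j : Fin L) (k l : Fin K),
      (Mb * Ub) (i, k) (j, l) = (∑ t ∈ Finset.range L, mb (i : ℕ) t * ub t (j : ℕ)) k l := by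
    intro i j k l
    rw [Matrix.mul_apply, Fintype.sum_prod_type]
    have h1 : ∀ j' : Fin L,
        (∑ l' : Fin K, Mb (i, k) (j', l') * Ub (j', l') (j, l))
          = (mb (i : ℕ) (j' : ℕ) * ub (j' : ℕ) (j : ℕ)) k l := by
      intro j'
      rw [Matrix.mul_apply]
      rfl
    rw [Finset.sum_congr rfl fun j' _ => h1 j']
    rw [Fin.sum_univ_eq_sum_range (fun t => (mb (i : ℕ) t * ub t (j : ℕ)) k l) L]
    rw [Matrix.sum_apply]
  -- decomposition of mb i t * N
  have hdecomp : ∀ (i t : ℕ) (N : Matrix (Fin K) (Fin K) ℂ),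
      mb i t * N = (if i = t then (x • 1 - Bm i) * N else 0) +
        (if t = i + 1 then -(Dm i) * N else 0) + (if i = t + 1 then -(Cm t) * N else 0) := by
    intro i t N
    simp only [hmb]
    split_ifs <;> first | (exfalso; omega) | simp
  have hsum : ∀ (i j : ℕ), i < L →
      (∑ t ∈ Finset.range L, mb i t * ub t j) =
      (x • 1 - Bm i) * ub i j + (if i + 1 < L then -(Dm i) * ub (i + 1) j else 0) +
        (if 1 ≤ i then -(Cm (i - 1)) * ub (i - 1) j else 0) := by
    intro i j hi
    rw [Finset.sum_congr rfl fun t _ => hdecomp i t (ub t j)]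
    exact split_sum L i hi (fun t => -(Cm t) * ub t j) (fun t => -(Dm i) * ub t j)
      (fun t => (x • 1 - Bm i) * ub t j)
  -- factoring helper
  have hfact : ∀ (E F G Pj q1 q2 q3 : Matrix (Fin K) (Fin K) ℂ),
      E * (q1 * Pj) + F * (q2 * Pj) + G * (q3 * Pj) = (E * q1 + F * q2 + G * q3) * Pj := by
    intros; noncomm_ring
  -- strictly-above-diagonal blocks vanish
  have htri0 : ∀ (i j : ℕ), i < j → j < L →
      (∑ t ∈ Finset.range L, mb i t * ub t j) = 0 := by
    intro i j hij hj
    have hi : i < L := lt_trans hij hj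
    rw [hsum i j hi]
    have hub1 : ub i j = p i * (p j)⁻¹ := if_pos (le_of_lt hij)
    have h2 : i + 1 < L := by omega
    have hub2 : ub (i + 1) j = p (i + 1) * (p j)⁻¹ := if_pos (by omega)
    rw [hub1, if_pos h2, hub2]
    cases i with
    | zero =>
      rw [if_neg (show ¬ (1:ℕ) ≤ 0 from by omega), add_zero, hp0]
      simp only [Nat.zero_add]
      have key : (x • 1 - Bm 0) * (1 : Matrix (Fin K) (Fin K) ℂ) + -(Dm 0) * p 1 = 0 := by
        rw [mul_one, ← hx1]; noncomm_ring
      calc (x • 1 - Bm 0) * ((1 : Matrix (Fin K) (Fin K) ℂ) * (p j)⁻¹) +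
            -(Dm 0) * (p 1 * (p j)⁻¹)
          = ((x • 1 - Bm 0) * 1 + -(Dm 0) * p 1) * (p j)⁻¹ := by noncomm_ring
        _ = 0 := by rw [key, zero_mul]
    | succ a =>
      rw [if_pos (by omega : 1 ≤ a + 1)]
      have hred : a + 1 - 1 = a := rfl
      rw [hred]
      have hub3 : ub a j = p a * (p j)⁻¹ := if_pos (by omega)
      rw [hub3]
      have key : (x • 1 - Bm (a + 1)) * p (a + 1) + -(Dm (a + 1)) * p (a + 2) +
          -(Cm a) * p a = 0 := by
        have e := hxr a
        rw [neg_mul, neg_mul, sub_mul, smul_mul_assoc, Matrix.one_mul, e]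
        abel
      rw [hfact, key, zero_mul]
  -- diagonal blocks
  have hdiag : ∀ (i : ℕ), i < L →
      (∑ t ∈ Finset.range L, mb i t * ub t i) = Dm i * p (i + 1) * (p i)⁻¹ := by
    intro i hi
    rw [hsum i i hi]
    have hub2 : ub (i + 1) i = 0 := if_neg (by omega)
    rw [hub2, mul_zero, ite_self]
    have hub1 : ub i i = p i * (p i)⁻¹ := if_pos le_rfl
    have hinv : p i * (p i)⁻¹ = 1 := Matrix.mul_nonsing_inv _ (hpd i hi)
    cases i with
    | zero =>
      rw [if_neg (by omega : ¬ 1 ≤ 0), add_zero, add_zero, hub1, hinv, mul_one, ← hx1]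
      rw [hp0, inv_one, mul_one]
    | succ a =>
      rw [if_pos (by omega : 1 ≤ a + 1)]
      have hred : a + 1 - 1 = a := rfl
      rw [hred]
      have hub3 : ub a (a + 1) = p a * (p (a + 1))⁻¹ := if_pos (by omega)
      rw [hub1, hub3, add_zero]
      have key : (x • 1 - Bm (a + 1)) * p (a + 1) + -(Cm a) * p a =
          Dm (a + 1) * p (a + 2) := by
        have e := hxr a
        rw [neg_mul, sub_mul, smul_mul_assoc, Matrix.one_mul, e]
        abel
      calc (x • 1 - Bm (a + 1)) * (p (a + 1) * (p (a + 1))⁻¹) +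
            -(Cm a) * (p a * (p (a + 1))⁻¹)
          = ((x • 1 - Bm (a + 1)) * p (a + 1) + -(Cm a) * p a) * (p (a + 1))⁻¹ := by
            noncomm_ring
        _ = Dm (a + 1) * p (a + 2) * (p (a + 1))⁻¹ := by rw [key]
  -- triangularity
  have htri : ((Mb * Ub)ᵀ).BlockTriangular Prod.fst := by
    rintro ⟨i, k⟩ ⟨j, l⟩ h
    rw [Matrix.transpose_apply, hprod j i l k, htri0 (j : ℕ) (i : ℕ) h i.isLt]
    rfl
  have htriU : Ub.BlockTriangular Prod.fst := by
    rintro ⟨i, k⟩ ⟨j, l⟩ h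
    show ub (i : ℕ) (j : ℕ) k l = 0
    rw [hub]
    simp only
    rw [if_neg (by exact Nat.not_le.mpr h)]
    rfl
  have himg : (Finset.univ.image (Prod.fst : Fin L × Fin K → Fin L)) = Finset.univ := by
    apply Finset.eq_univ_iff_forall.mpr
    intro i
    exact Finset.mem_image.mpr ⟨(i, ⟨0, hK⟩), Finset.mem_univ _, rfl⟩
  -- determinant of Ub
  have hdetU : Ub.det = 1 := by
    rw [htriU.det, himg]
    refine Finset.prod_eq_one fun a _ => ?_
    rw [det_toSquareBlock_fst Ub a 1 ?_, Matrix.det_one]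
    intro z w hz hw
    show ub (z.1 : ℕ) (w.1 : ℕ) z.2 w.2 = (1 : Matrix (Fin K) (Fin K) ℂ) z.2 w.2
    rw [hz, hw, hub]
    simp only
    rw [if_pos le_rfl, Matrix.mul_nonsing_inv _ (hpd a a.isLt)]
  -- determinant of Mb * Ub
  have hdetMU : (Mb * Ub).det
      = ∏ i : Fin L, (Dm (i : ℕ) * p ((i : ℕ) + 1) * (p (i : ℕ))⁻¹).det := by
    rw [← Matrix.det_transpose, htri.det, himg]
    refine Finset.prod_congr rfl fun a _ => ?_
    rw [det_toSquareBlock_fst ((Mb * Ub)ᵀ) a (Dm (a : ℕ) * p ((a : ℕ) + 1) * (p (a : ℕ))⁻¹)ᵀ ?_,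
      Matrix.det_transpose]
    intro z w hz hw
    rw [Matrix.transpose_apply, Matrix.transpose_apply]
    have hw' : w = (a, w.2) := Prod.ext hw rfl
    have hz' : z = (a, z.2) := Prod.ext hz rfl
    rw [hw', hz', hprod a a w.2 z.2, hdiag (a : ℕ) a.isLt]
  -- telescoping
  have htel : ∀ m, m ≤ L →
      (∏ i ∈ Finset.range m, (Dm i * p (i + 1) * (p i)⁻¹).det)
        = (∏ i ∈ Finset.range m, (Dm i).det) * (p m).det := by
    intro m
    induction m with
    | zero => intro _; simp [hp0]
    | succ a ih =>
      intro h
      rw [Finset.prod_range_succ, ih (by omega), Finset.prod_range_succ]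
      rw [Matrix.det_mul, Matrix.det_mul]
      have hinv : ((p a)⁻¹).det = ((p a).det)⁻¹ := by
        rw [Matrix.det_nonsing_inv, Ring.inverse_eq_inv']
      have hne : (p a).det ≠ 0 := (hpd a (by omega)).ne_zero
      rw [hinv]
      field_simp
  calc (x • (1 : Matrix (Fin L × Fin K) (Fin L × Fin K) ℂ) - A).det
      = Mb.det := by rw [hMb]
    _ = Mb.det * Ub.det := by rw [hdetU, mul_one]
    _ = (Mb * Ub).det := (Matrix.det_mul _ _).symm
    _ = ∏ i : Fin L, (Dm (i : ℕ) * p ((i : ℕ) + 1) * (p (i : ℕ))⁻¹).det := hdetMU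
    _ = ∏ i ∈ Finset.range L, (Dm i * p (i + 1) * (p i)⁻¹).det := by
        exact Fin.prod_univ_eq_prod_range (fun t => (Dm t * p (t + 1) * (p t)⁻¹).det) L
    _ = _ := htel L le_rfl

end BlockTridiagAux

open BlockTridiagAux in
/-- if the block tridiagonal matrix `A` is diagonalizable, its characteristic
polynomial equals `det (P_L)` up to the nonzero constant `det(D₀ ⋯ D_{L-1})`; in particular
each eigenvalue has the same multiplicity as a root of the two polynomials. -/
theorem blockTridiag_charpoly_eq_det_matrixPoly
    (K L : ℕ) (hK : 0 < K) (hL : 0 < L)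
    (Bm Cm Dm : ℕ → Matrix (Fin K) (Fin K) ℂ)
    (hD : ∀ n, IsUnit (Dm n))
    (A : Matrix (Fin L × Fin K) (Fin L × Fin K) ℂ)
    (hA : ∀ (i j : Fin L) (k l : Fin K),
      A (i, k) (j, l) =
        if (i : ℕ) = (j : ℕ) then Bm (i : ℕ) k l
        else if (j : ℕ) = (i : ℕ) + 1 then Dm (i : ℕ) k l
        else if (i : ℕ) = (j : ℕ) + 1 then Cm (j : ℕ) k l
        else 0)
    (hDiag : ∃ (V : Matrix (Fin L × Fin K) (Fin L × Fin K) ℂ) (d : Fin L × Fin K → ℂ),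
      IsUnit V ∧ A = V * Matrix.diagonal d * V⁻¹)
    (P : ℕ → Matrix (Fin K) (Fin K) (Polynomial ℂ))
    (hP0 : P 0 = 1)
    (hP1 : P 1 = ((Dm 0)⁻¹).map Polynomial.C *
      ((Polynomial.X : Polynomial ℂ) • (1 : Matrix (Fin K) (Fin K) (Polynomial ℂ)) -
        (Bm 0).map Polynomial.C))
    (hPrec : ∀ n, P (n + 2) = ((Dm (n + 1))⁻¹).map Polynomial.C *
      ((Polynomial.X : Polynomial ℂ) • P (n + 1) -
        (Bm (n + 1)).map Polynomial.C * P (n + 1) -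
        (Cm n).map Polynomial.C * P n)) :
    A.charpoly = Polynomial.C (∏ i ∈ Finset.range L, (Dm i).det) * (P L).det ∧
    ∀ lam : ℂ, A.charpoly.rootMultiplicity lam = (P L).det.rootMultiplicity lam := by
  classical
  have hDu : ∀ n, IsUnit (Dm n).det := fun n => (Matrix.isUnit_iff_isUnit_det _).mp (hD n)
  have hDD : ∀ n, Dm n * (Dm n)⁻¹ = 1 := fun n => Matrix.mul_nonsing_inv _ (hDu n)
  have hQ1 : (Dm 0).map (⇑Polynomial.C) * P 1 =
      (Polynomial.X : Polynomial ℂ) • 1 - (Bm 0).map ⇑Polynomial.C := by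
    rw [hP1, ← Matrix.mul_assoc, ← Matrix.map_mul, hDD 0,
      Matrix.map_one _ (map_zero Polynomial.C) (map_one Polynomial.C), Matrix.one_mul]
  have hQr : ∀ n, (Dm (n + 1)).map ⇑Polynomial.C * P (n + 2) =
      (Polynomial.X : Polynomial ℂ) • P (n + 1) -
        (Bm (n + 1)).map ⇑Polynomial.C * P (n + 1) - (Cm n).map ⇑Polynomial.C * P n := by
    intro n
    rw [hPrec n, ← Matrix.mul_assoc, ← Matrix.map_mul, hDD (n + 1),
      Matrix.map_one _ (map_zero Polynomial.C) (map_one Polynomial.C), Matrix.one_mul]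
  have hPD := P_deg_unit Bm Cm Dm hD P hP0 hP1 hPrec
  have hPdet : ∀ n, (P n).det ≠ 0 := fun n => det_ne_zero_of_unit_mcoeff (hPD n).1 (hPD n).2
  set q : Polynomial ℂ := ∏ j ∈ Finset.range L, (P j).det with hq
  have hqne : q ≠ 0 := Finset.prod_ne_zero_iff.mpr fun j _ => hPdet j
  set c : ℂ := ∏ i ∈ Finset.range L, (Dm i).det with hc
  have key : ∀ x : ℂ, Polynomial.eval x q ≠ 0 →
      Polynomial.eval x A.charpoly = Polynomial.eval x (Polynomial.C c * (P L).det) := by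
    intro x hx
    have hgood : ∀ j, j < L → Polynomial.eval x ((P j).det) ≠ 0 := by
      intro j hj hx0
      apply hx
      rw [hq, Polynomial.eval_prod]
      exact Finset.prod_eq_zero (Finset.mem_range.mpr hj) hx0
    set φ := (Polynomial.evalRingHom x).mapMatrix (m := Fin K) with hφ
    set p : ℕ → Matrix (Fin K) (Fin K) ℂ := fun n => φ (P n) with hp
    have hp0' : p 0 = 1 := by rw [hp]; simp only [hP0, map_one]
    have hx1 : Dm 0 * p 1 = x • 1 - Bm 0 := by
      have h := congrArg φ hQ1
      rwa [map_mul, map_sub, phi_mapC, phi_smulX, map_one, phi_mapC] at h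
    have hxr : ∀ n, Dm (n + 1) * p (n + 2) =
        x • p (n + 1) - Bm (n + 1) * p (n + 1) - Cm n * p n := by
      intro n
      have h := congrArg φ (hQr n)
      rwa [map_mul, map_sub, map_sub, phi_mapC, phi_smulX, map_mul, phi_mapC,
        map_mul, phi_mapC] at h
    have hpd : ∀ j, j < L → IsUnit (p j).det := by
      intro j hj
      have hdet : (p j).det = Polynomial.eval x ((P j).det) := by
        rw [hp]
        simp only [hφ, RingHom.mapMatrix_apply]
        exact ((Polynomial.evalRingHom x).map_det (P j)).symm
      rw [hdet]
      exact isUnit_iff_ne_zero.mpr (hgood j hj)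
    have hdet := det_block K L hK x Bm Cm Dm A hA p hp0' hx1 hxr hpd
    have hchar : Polynomial.eval x A.charpoly
        = (x • (1 : Matrix (Fin L × Fin K) (Fin L × Fin K) ℂ) - A).det := by
      have h1 : Polynomial.eval x A.charpoly
          = ((Matrix.charmatrix A).map (Polynomial.evalRingHom x)).det := by
        exact (Polynomial.evalRingHom x).map_det (Matrix.charmatrix A)
      rw [h1]
      congr 1
      ext z w
      by_cases hzw : z = w
      · subst hzw
        simp [Matrix.charmatrix_apply_eq, Matrix.map_apply]
      · simp [Matrix.charmatrix_apply_ne _ _ _ hzw, Matrix.map_apply, Matrix.one_apply_ne hzw,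
          hzw]
    have hRHS : Polynomial.eval x (Polynomial.C c * (P L).det) = c * (p L).det := by
      rw [Polynomial.eval_mul, Polynomial.eval_C]
      congr 1
      rw [hp]
      simp only [hφ, RingHom.mapMatrix_apply]
      exact (Polynomial.evalRingHom x).map_det (P L)
    rw [hchar, hdet, hRHS, hc]
  have hfin : {x : ℂ | q.IsRoot x}.Finite := Polynomial.finite_setOf_isRoot hqne
  have hinf : {x : ℂ | Polynomial.eval x A.charpoly
      = Polynomial.eval x (Polynomial.C c * (P L).det)}.Infinite := by
    refine Set.Infinite.mono ?_ (hfin.infinite_compl)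
    intro x hx
    exact key x hx
  have heq : A.charpoly = Polynomial.C c * (P L).det :=
    Polynomial.eq_of_infinite_eval_eq _ _ hinf
  refine ⟨heq, fun lam => ?_⟩
  have hcne : c ≠ 0 := by
    rw [hc]
    exact Finset.prod_ne_zero_iff.mpr fun i _ => (hDu i).ne_zero
  have hCc : (Polynomial.C c : Polynomial ℂ) ≠ 0 := by
    simpa using hcne
  have hne : Polynomial.C c * (P L).det ≠ 0 := mul_ne_zero hCc (hPdet L)
  rw [heq, Polynomial.rootMultiplicity_mul hne, Polynomial.rootMultiplicity_C, zero_add]
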